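/- The (P,π,w)-weight ω̄_{w,(P,π)} is a weight on V = ⊕_{i=1}^s F_q^{k_i}; that is, it is nonnegative and vanishes only at 0, is symmetric under negation, and satisfies ω̄(u+v) ≤ ω̄(u) + ω̄(v). Consequently d_{w,(P,π)}(u,v) := ω̄_{w,(P,π)}(u-v) is a metric on V. -/

import Mathlib

attribute [local instance] Classical.propDecidable

noncomputable section

variable {ι F : Type*}

section Defs
variable [Fintype ι] [PartialOrder ι] [Field F] [Fintype F] {k : ι → ℕ}

/-- block support -/
def suppB (u : ∀ i, Fin (k i) → F) : Finset ι :=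
  Finset.univ.filter fun i => u i ≠ 0

/-- order ideal generated by the block support -/
def idealOf (u : ∀ i, Fin (k i) → F) : Finset ι :=
  Finset.univ.filter fun i => ∃ j ∈ suppB u, i ≤ j

/-- maximal elements of the ideal generated by the support -/
def maxOf (u : ∀ i, Fin (k i) → F) : Finset ι :=
  (idealOf u).filter fun i => ∀ j ∈ idealOf u, i ≤ j → i = j

/-- maximal weight of a block -/
def Wblk (w : F → ℕ) (u : ∀ i, Fin (k i) → F) (i : ι) : ℕ :=
  Finset.univ.sup fun j => w (u i j)

/-- maximal value of the weight -/
def Mw (w : F → ℕ) : ℕ := Finset.univ.sup w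

/-- minimal value of the weight on nonzero elements -/
def mw (w : F → ℕ) : ℕ := sInf (w '' {a | a ≠ 0})

/-- the weighted poset block weight -/
def omegaW (w : F → ℕ) (u : ∀ i, Fin (k i) → F) : ℕ :=
  (∑ i ∈ maxOf u, Wblk w u i) + (idealOf u \ maxOf u).card * Mw w

/-- principal ideal generated by `i` -/
def pIdeal (i : ι) : Finset ι := Finset.univ.filter fun j => j ≤ i

end Defs


set_option linter.unusedSectionVars false
section Aux2
variable [Fintype ι] [PartialOrder ι] [Field F] [Fintype F] {k : ι → ℕ}

/-- pointwise contribution to omegaW -/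
def fW (w : F → ℕ) (u : ∀ i, Fin (k i) → F) (i : ι) : ℕ :=
  if i ∈ maxOf u then Wblk w u i else if i ∈ idealOf u then Mw w else 0

lemma mem_suppB {u : ∀ i, Fin (k i) → F} {i : ι} : i ∈ suppB u ↔ u i ≠ 0 := by
  simp [suppB]

lemma mem_idealOf {u : ∀ i, Fin (k i) → F} {i : ι} :
    i ∈ idealOf u ↔ ∃ j, u j ≠ 0 ∧ i ≤ j := by
  simp [idealOf, suppB]

lemma mem_maxOf {u : ∀ i, Fin (k i) → F} {i : ι} :
    i ∈ maxOf u ↔ i ∈ idealOf u ∧ ∀ j ∈ idealOf u, i ≤ j → i = j := by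
  simp [maxOf]

lemma maxOf_subset (u : ∀ i, Fin (k i) → F) : maxOf u ⊆ idealOf u :=
  Finset.filter_subset _ _

lemma le_Wblk (w : F → ℕ) (u : ∀ i, Fin (k i) → F) (i : ι) (j : Fin (k i)) :
    w (u i j) ≤ Wblk w u i :=
  Finset.le_sup (f := fun j => w (u i j)) (Finset.mem_univ j)

lemma Wblk_le_Mw (w : F → ℕ) (u : ∀ i, Fin (k i) → F) (i : ι) :
    Wblk w u i ≤ Mw w :=
  Finset.sup_le fun j _ => Finset.le_sup (f := w) (Finset.mem_univ (u i j))

lemma Wblk_zero_block {w : F → ℕ} (hw0 : ∀ a : F, w a = 0 ↔ a = 0)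
    {u : ∀ i, Fin (k i) → F} {i : ι} (hu : u i = 0) : Wblk w u i = 0 :=
  Nat.le_zero.mp (Finset.sup_le fun j _ => by
    rw [hu]; simp [(hw0 0).mpr rfl])

lemma not_mem_ideal_block {u : ∀ i, Fin (k i) → F} {i : ι}
    (h : i ∉ idealOf u) : u i = 0 := by
  by_contra hne
  exact h (mem_idealOf.mpr ⟨i, hne, le_refl i⟩)

lemma omegaW_eq_sum (w : F → ℕ) (u : ∀ i, Fin (k i) → F) :
    omegaW w u = ∑ i, fW w u i := by
  have h1 : ∑ i ∈ idealOf u, fW w u i = ∑ i, fW w u i := by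
    refine Finset.sum_subset (Finset.subset_univ _) fun x _ hx => ?_
    have hm : x ∉ maxOf u := fun h => hx (maxOf_subset u h)
    simp [fW, hm, hx]
  have h3 : ∑ i ∈ idealOf u, fW w u i
      = (∑ i ∈ maxOf u, Wblk w u i) + (idealOf u \ maxOf u).card * Mw w := by
    rw [← Finset.sum_sdiff (maxOf_subset u), add_comm]
    congr 1
    · exact Finset.sum_congr rfl fun i hi => by simp [fW, hi]
    · calc ∑ i ∈ idealOf u \ maxOf u, fW w u i
          = ∑ _i ∈ idealOf u \ maxOf u, Mw w := by
            refine Finset.sum_congr rfl fun i hi => ?_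
            rcases Finset.mem_sdiff.mp hi with ⟨hid, hnm⟩
            simp [fW, hnm, hid]
        _ = (idealOf u \ maxOf u).card * Mw w := by rw [Finset.sum_const, smul_eq_mul]
  rw [omegaW, ← h3, h1]

lemma Wblk_le_fW {w : F → ℕ} (hw0 : ∀ a : F, w a = 0 ↔ a = 0)
    (u : ∀ i, Fin (k i) → F) (i : ι) : Wblk w u i ≤ fW w u i := by
  unfold fW
  by_cases hm : i ∈ maxOf u
  · simp [hm]
  by_cases hi : i ∈ idealOf u
  · simp [hm, hi, Wblk_le_Mw]
  · simp [hm, hi, Wblk_zero_block hw0 (not_mem_ideal_block hi)]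

lemma Wblk_add_le {w : F → ℕ} (hwadd : ∀ a b : F, w (a + b) ≤ w a + w b)
    (u v : ∀ i, Fin (k i) → F) (i : ι) :
    Wblk w (u + v) i ≤ Wblk w u i + Wblk w v i := by
  refine Finset.sup_le fun j _ => ?_
  calc w ((u + v) i j) = w (u i j + v i j) := rfl
    _ ≤ w (u i j) + w (v i j) := hwadd _ _
    _ ≤ Wblk w u i + Wblk w v i := add_le_add (le_Wblk w u i j) (le_Wblk w v i j)

lemma fW_add_le {w : F → ℕ} (hw0 : ∀ a : F, w a = 0 ↔ a = 0)
    (hwadd : ∀ a b : F, w (a + b) ≤ w a + w b)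
    (u v : ∀ i, Fin (k i) → F) (i : ι) :
    fW w (u + v) i ≤ fW w u i + fW w v i := by
  by_cases hm : i ∈ maxOf (u + v)
  · calc fW w (u + v) i = Wblk w (u + v) i := by simp [fW, hm]
      _ ≤ Wblk w u i + Wblk w v i := Wblk_add_le hwadd u v i
      _ ≤ fW w u i + fW w v i := add_le_add (Wblk_le_fW hw0 u i) (Wblk_le_fW hw0 v i)
  by_cases hi : i ∈ idealOf (u + v)
  · have hfuv : fW w (u + v) i = Mw w := by simp [fW, hm, hi]
    -- there is j strictly above i in the ideal
    have : ¬ (i ∈ idealOf (u+v) ∧ ∀ j ∈ idealOf (u+v), i ≤ j → i = j) := fun h => hm (mem_maxOf.mpr h)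
    push_neg at this
    obtain ⟨j, hj, hij, hne⟩ := this hi
    obtain ⟨m, hm0, hjm⟩ := mem_idealOf.mp hj
    have him : i ≤ m := le_trans hij hjm
    have hum : u m ≠ 0 ∨ v m ≠ 0 := by
      by_contra hc
      push_neg at hc
      apply hm0
      funext t
      show u m t + v m t = 0
      rw [hc.1, hc.2]; simp
    rw [hfuv]
    rcases hum with h | h
    · have hiu : i ∈ idealOf u := mem_idealOf.mpr ⟨m, h, him⟩
      have hju : j ∈ idealOf u := mem_idealOf.mpr ⟨m, h, hjm⟩
      have hnmu : i ∉ maxOf u := fun hx => hne ((mem_maxOf.mp hx).2 j hju hij)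
      have : fW w u i = Mw w := by simp [fW, hnmu, hiu]
      rw [this]; exact Nat.le_add_right _ _
    · have hiv : i ∈ idealOf v := mem_idealOf.mpr ⟨m, h, him⟩
      have hjv : j ∈ idealOf v := mem_idealOf.mpr ⟨m, h, hjm⟩
      have hnmv : i ∉ maxOf v := fun hx => hne ((mem_maxOf.mp hx).2 j hjv hij)
      have : fW w v i = Mw w := by simp [fW, hnmv, hiv]
      rw [this]; exact Nat.le_add_left _ _
  · simp [fW, hm, hi]

lemma suppB_neg (u : ∀ i, Fin (k i) → F) : suppB (-u) = suppB u := by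
  ext i
  simp [mem_suppB, neg_eq_zero]

lemma idealOf_neg (u : ∀ i, Fin (k i) → F) : idealOf (-u) = idealOf u := by
  unfold idealOf; rw [suppB_neg]

lemma maxOf_neg (u : ∀ i, Fin (k i) → F) : maxOf (-u) = maxOf u := by
  unfold maxOf; rw [idealOf_neg]

lemma Wblk_neg {w : F → ℕ} (hwneg : ∀ a : F, w (-a) = w a)
    (u : ∀ i, Fin (k i) → F) (i : ι) : Wblk w (-u) i = Wblk w u i :=
  Finset.sup_congr rfl fun j _ => by
    show w (-(u i j)) = w (u i j)
    exact hwneg _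

lemma omegaW_neg {w : F → ℕ} (hwneg : ∀ a : F, w (-a) = w a)
    (u : ∀ i, Fin (k i) → F) : omegaW w (-u) = omegaW w u := by
  unfold omegaW
  rw [idealOf_neg, maxOf_neg]
  congr 1
  exact Finset.sum_congr rfl fun i _ => Wblk_neg hwneg u i

lemma omegaW_zero_iff {w : F → ℕ} (hw0 : ∀ a : F, w a = 0 ↔ a = 0)
    (u : ∀ i, Fin (k i) → F) : omegaW w u = 0 ↔ u = 0 := by
  constructor
  · intro h
    by_contra hne
    have hsupp : (suppB u).Nonempty := by
      rcases Function.ne_iff.mp hne with ⟨i, hi⟩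
      exact ⟨i, mem_suppB.mpr hi⟩
    obtain ⟨i₀, hi₀, hmax⟩ : ∃ i₀ ∈ suppB u, ∀ x ∈ suppB u, ¬ i₀ < x := by
      obtain ⟨i, hi⟩ := Finset.exists_maximal hsupp
      exact ⟨i, hi.1, fun x hx hlt => not_le_of_gt hlt (hi.2 hx hlt.le)⟩
    have hi₀max : i₀ ∈ maxOf u := by
      refine mem_maxOf.mpr ⟨mem_idealOf.mpr ⟨i₀, mem_suppB.mp hi₀, le_refl _⟩, ?_⟩
      intro j hj hij
      obtain ⟨m, hm0, hjm⟩ := mem_idealOf.mp hj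
      have him : i₀ ≤ m := le_trans hij hjm
      have : i₀ = m := by
        by_contra hc
        exact hmax m (mem_suppB.mpr hm0) (lt_of_le_of_ne him hc)
      subst this
      exact le_antisymm hij hjm
    obtain ⟨t, ht⟩ := Function.ne_iff.mp (mem_suppB.mp hi₀)
    have hpos : 0 < Wblk w u i₀ := by
      have h1 : w (u i₀ t) ≤ Wblk w u i₀ := le_Wblk w u i₀ t
      have h2 : 0 < w (u i₀ t) := Nat.pos_of_ne_zero (fun hz => ht ((hw0 _).mp hz))
      omega
    have : Wblk w u i₀ ≤ omegaW w u := by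
      rw [omegaW_eq_sum]
      calc Wblk w u i₀ = fW w u i₀ := by simp [fW, hi₀max]
        _ ≤ ∑ i, fW w u i := Finset.single_le_sum (fun i _ => Nat.zero_le _) (Finset.mem_univ i₀)
    omega
  · rintro rfl
    have hsupp : suppB (0 : ∀ i, Fin (k i) → F) = ∅ := by
      ext i; simp [mem_suppB]
    have hideal : idealOf (0 : ∀ i, Fin (k i) → F) = ∅ := by
      ext i; simp [mem_idealOf]
    have hmax : maxOf (0 : ∀ i, Fin (k i) → F) = ∅ := by
      rw [maxOf, hideal]; rfl
    simp [omegaW, hideal, hmax]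

end Aux2


/-- The `(P,π,w)`-weight is a weight on `V`, and the induced distance is a metric. -/
theorem stmt1 [Fintype ι] [PartialOrder ι] [Field F] [Fintype F] {k : ι → ℕ}
    (w : F → ℕ)
    (hw0 : ∀ a : F, w a = 0 ↔ a = 0)
    (hwneg : ∀ a : F, w (-a) = w a)
    (hwadd : ∀ a b : F, w (a + b) ≤ w a + w b) :
    (∀ u : ∀ i, Fin (k i) → F, omegaW w u = 0 ↔ u = 0) ∧
    (∀ u : ∀ i, Fin (k i) → F, omegaW w (-u) = omegaW w u) ∧
    (∀ u v : ∀ i, Fin (k i) → F, omegaW w (u + v) ≤ omegaW w u + omegaW w v) ∧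
    (∀ u v : ∀ i, Fin (k i) → F, omegaW w (u - v) = 0 ↔ u = v) ∧
    (∀ u v : ∀ i, Fin (k i) → F, omegaW w (u - v) = omegaW w (v - u)) ∧
    (∀ u v x : ∀ i, Fin (k i) → F,
      omegaW w (u - v) ≤ omegaW w (u - x) + omegaW w (x - v)) := by
  have key : ∀ u v : ∀ i, Fin (k i) → F,
      omegaW w (u + v) ≤ omegaW w u + omegaW w v := by
    intro u v
    rw [omegaW_eq_sum, omegaW_eq_sum, omegaW_eq_sum, ← Finset.sum_add_distrib]
    exact Finset.sum_le_sum fun i _ => fW_add_le hw0 hwadd u v i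
  refine ⟨omegaW_zero_iff hw0, omegaW_neg hwneg, key, ?_, ?_, ?_⟩
  · intro u v
    rw [omegaW_zero_iff hw0, sub_eq_zero]
  · intro u v
    rw [← neg_sub v u, omegaW_neg hwneg]
  · intro u v x
    have : u - v = (u - x) + (x - v) := by abel
    rw [this]
    exact key _ _
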